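/- The fixed field of σ equals F₂(s): an element a ∈ F₂(t) satisfies σ(a) = a if and only if a lies in the subfield of F₂(t) generated by F₂ and s = (t³+t+1)/(t²+t). -/

import Mathlib

namespace FixedAux

noncomputable abbrev T : RatFunc (ZMod 2) := RatFunc.X

lemma h2 : (2 : RatFunc (ZMod 2)) = 0 := by
  have h : (2 : RatFunc (ZMod 2)) = RatFunc.C 1 + RatFunc.C 1 := by
    rw [map_one]; norm_num
  rw [h, ← map_add]
  have h0 : (1 + 1 : ZMod 2) = 0 := by decide
  rw [h0, map_zero]

lemma hX0 : T ≠ 0 := RatFunc.X_ne_zero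

lemma hX1 : T + 1 ≠ 0 := by
  have h : T + 1 = algebraMap (Polynomial (ZMod 2)) (RatFunc (ZMod 2)) (Polynomial.X + 1) := by
    simp [RatFunc.algebraMap_X]
  rw [h]
  simp only [ne_eq, FaithfulSMul.algebraMap_eq_zero_iff]
  intro hh
  have := congrArg (fun p => Polynomial.coeff p 1) hh
  simp [Polynomial.coeff_one, Polynomial.coeff_X] at this

lemma hXX1 : T ^ 2 + T + 1 ≠ 0 := by
  have h : T ^ 2 + T + 1
      = algebraMap (Polynomial (ZMod 2)) (RatFunc (ZMod 2)) (Polynomial.X ^ 2 + Polynomial.X + 1) := by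
    simp
  rw [h]
  simp only [ne_eq, FaithfulSMul.algebraMap_eq_zero_iff]
  intro hh
  have := congrArg (fun p => Polynomial.coeff p 2) hh
  simp [Polynomial.coeff_one, Polynomial.coeff_X] at this

lemma hT1 : T ^ 2 + T ≠ 0 := by
  have h : T ^ 2 + T = T * (T + 1) := by ring
  rw [h]; exact mul_ne_zero hX0 hX1

lemma hnum : ((T+1)/T)^3 + (T+1)/T + 1 = (T^3+T+1)/T^3 := by
  field_simp [hX0]
  linear_combination (T^3 + 2*T^2 + T) * h2

lemma hden : ((T+1)/T)^2 + (T+1)/T = (T+1)/T^2 := by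
  field_simp [hX0]
  linear_combination (T^2 + T) * h2

lemma hcomp : (((T+1)/T)^3 + (T+1)/T + 1) / (((T+1)/T)^2 + (T+1)/T) = (T^3+T+1)/(T^2+T) := by
  rw [hnum, hden]
  rw [div_div_div_comm]
  have h32 : T^3 / T^2 = T := by
    field_simp [hX0]
  rw [h32, div_div]
  congr 1
  ring

lemma hcomp2 : ((T+1)/T + 1)/((T+1)/T) = 1/(T+1) := by
  rw [div_eq_div_iff (div_ne_zero hX1 hX0) hX1]
  field_simp [hX0]
  linear_combination (T + T^2) * h2

lemma haux3 : (T+1)/T + 1 = 1/T := by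
  rw [div_add' _ _ _ hX0, div_eq_div_iff hX0 hX0]
  linear_combination T^2 * h2

lemma hcomp3 : 1/((T+1)/T + 1) = T := by
  rw [haux3, one_div_one_div]

section
variable (σ : RatFunc (ZMod 2) ≃+* RatFunc (ZMod 2))
  (hfix : ∀ c : ZMod 2, σ (RatFunc.C c) = RatFunc.C c)
  (hX : σ RatFunc.X = (RatFunc.X + 1) / RatFunc.X)

include hfix hX

lemma sigma2X : σ (σ RatFunc.X) = 1/(T+1) := by
  rw [hX, map_div₀, map_add, map_one, hX]
  exact hcomp2

lemma sigma3X : σ (σ (σ RatFunc.X)) = RatFunc.X := by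
  rw [sigma2X σ hfix hX, one_div, map_inv₀, map_add, map_one, hX, ← one_div]
  exact hcomp3

lemma sigma_cube : ∀ a, σ (σ (σ a)) = a := by
  have hpoly : ∀ p : Polynomial (ZMod 2),
      σ (σ (σ (algebraMap (Polynomial (ZMod 2)) (RatFunc (ZMod 2)) p)))
        = algebraMap (Polynomial (ZMod 2)) (RatFunc (ZMod 2)) p := by
    intro p
    induction p using Polynomial.induction_on' with
    | add p q hp hq => rw [map_add, map_add, map_add, map_add, hp, hq]
    | monomial n c =>
        rw [← Polynomial.C_mul_X_pow_eq_monomial, map_mul, map_pow,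
          RatFunc.algebraMap_C, RatFunc.algebraMap_X]
        rw [map_mul, map_mul, map_mul, map_pow, map_pow, map_pow,
          hfix, hfix, hfix, sigma3X σ hfix hX]
  intro a
  induction a using RatFunc.induction_on with
  | f p q hq => rw [map_div₀, map_div₀, map_div₀, hpoly, hpoly]

lemma sigma_s (s : RatFunc (ZMod 2))
    (hs : s = (RatFunc.X ^ 3 + RatFunc.X + 1) / (RatFunc.X ^ 2 + RatFunc.X)) : σ s = s := by
  rw [hs, map_div₀]
  simp only [map_add, map_pow, map_one, hX]
  exact hcomp

lemma sigmaX_ne : σ RatFunc.X ≠ RatFunc.X := by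
  rw [hX]
  intro hh
  rw [div_eq_iff hX0] at hh
  exact hXX1 (by linear_combination -hh + (T+1) * h2)

lemma sigma2X_ne : σ (σ RatFunc.X) ≠ RatFunc.X := by
  rw [sigma2X σ hfix hX]
  intro hh
  rw [div_eq_iff hX1] at hh
  exact hXX1 (by linear_combination -hh + 1 * h2)

end
end FixedAux

open FixedAux IntermediateField in
set_option maxHeartbeats 1000000 in
set_option synthInstance.maxHeartbeats 400000 in
/-- The fixed field of `σ` equals `𝔽₂(s)`: an element `a ∈ 𝔽₂(t)`
satisfies `σ(a) = a` if and only if `a` lies in the subfield of `𝔽₂(t)` generated by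
`𝔽₂` and `s = (t³+t+1)/(t²+t)`.  Here `σ` is the `𝔽₂`-algebra automorphism of
`𝔽₂(t)` determined by `σ(t) = (t+1)/t`. -/
theorem fixed_field_eq_adjoin_s
    (σ : RatFunc (ZMod 2) ≃+* RatFunc (ZMod 2))
    (hfix : ∀ c : ZMod 2, σ (RatFunc.C c) = RatFunc.C c)
    (hX : σ RatFunc.X = (RatFunc.X + 1) / RatFunc.X)
    (s : RatFunc (ZMod 2))
    (hs : s = (RatFunc.X ^ 3 + RatFunc.X + 1) / (RatFunc.X ^ 2 + RatFunc.X))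
    (a : RatFunc (ZMod 2)) :
    σ a = a ↔ a ∈ IntermediateField.adjoin (ZMod 2) {s} := by
  classical
  -- the subfield of fixed points of σ
  let Sfix : Subfield (RatFunc (ZMod 2)) :=
    { carrier := {x | σ x = x}
      zero_mem' := map_zero σ
      one_mem' := map_one σ
      add_mem' := fun hx hy => by simp_all [Set.mem_setOf_eq, map_add]
      mul_mem' := fun hx hy => by simp_all [Set.mem_setOf_eq, map_mul]
      neg_mem' := fun hx => by simp_all [Set.mem_setOf_eq, map_neg]
      inv_mem' := fun x hx => by simp_all [Set.mem_setOf_eq, map_inv₀] }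
  let Efix : IntermediateField (ZMod 2) (RatFunc (ZMod 2)) :=
    Sfix.toIntermediateField (fun c => by
      show σ _ = _
      rw [RatFunc.algebraMap_eq_C]; exact hfix c)
  have hEfix : IntermediateField.adjoin (ZMod 2) {s} ≤ Efix := by
    rw [IntermediateField.adjoin_le_iff]
    intro x hx
    rw [Set.mem_singleton_iff] at hx
    have hσx : σ x = x := by rw [hx]; exact sigma_s σ hfix hX s hs
    exact hσx
  let E : IntermediateField (ZMod 2) (RatFunc (ZMod 2)) := IntermediateField.adjoin (ZMod 2) {s}
  -- σ as an E-algebra automorphism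
  let σ' : RatFunc (ZMod 2) ≃ₐ[E] RatFunc (ZMod 2) :=
    AlgEquiv.ofRingEquiv (f := σ) (fun x => hEfix x.2)
  have hσ'apply : ∀ b : RatFunc (ZMod 2), σ' b = σ b := fun _ => rfl
  -- s as element of E, and the cubic polynomial
  have hsmem : s ∈ E := IntermediateField.subset_adjoin _ _ rfl
  let sE : E := ⟨s, hsmem⟩
  have hsX : s * (T^2 + T) = T^3 + T + 1 := by
    rw [hs, div_mul_cancel₀ _ hT1]
  let Q : Polynomial E := Polynomial.C sE * Polynomial.X^2
      + Polynomial.C (sE + 1) * Polynomial.X + 1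
  let P : Polynomial E := Polynomial.X^3 + Q
  have hQdeg : Q.degree ≤ 2 := by
    unfold Q
    compute_degree
  have hPmonic : P.Monic := by
    have h23 : Q.degree < 3 := lt_of_le_of_lt hQdeg (by decide)
    exact Polynomial.monic_X_pow_add h23
  have haev : Polynomial.aeval (RatFunc.X : RatFunc (ZMod 2)) P = 0 := by
    have hcoe : algebraMap E (RatFunc (ZMod 2)) sE = s := rfl
    have hcoe1 : algebraMap E (RatFunc (ZMod 2)) (sE + 1) = s + 1 := by
      rw [map_add, map_one, hcoe]
    simp only [P, Q, map_add, map_mul, map_pow, Polynomial.aeval_X, Polynomial.aeval_C,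
      map_one, hcoe, hcoe1]
    linear_combination hsX + (T^3 + T + 1) * h2
  have hint : IsIntegral E (RatFunc.X : RatFunc (ZMod 2)) :=
    ⟨P, hPmonic, by rwa [← Polynomial.aeval_def]⟩
  -- RatFunc (ZMod 2) = E(X)
  have hpolymem : ∀ p : Polynomial (ZMod 2),
      algebraMap (Polynomial (ZMod 2)) (RatFunc (ZMod 2)) p
        ∈ IntermediateField.adjoin E {(RatFunc.X : RatFunc (ZMod 2))} := by
    intro p
    induction p using Polynomial.induction_on' with
    | add p q hp hq => rw [map_add]; exact add_mem hp hq
    | monomial n c =>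
        rw [← Polynomial.C_mul_X_pow_eq_monomial, map_mul, map_pow,
          RatFunc.algebraMap_C, RatFunc.algebraMap_X]
        have hXmem : (RatFunc.X : RatFunc (ZMod 2))
            ∈ IntermediateField.adjoin E {(RatFunc.X : RatFunc (ZMod 2))} :=
          IntermediateField.subset_adjoin E _ (Set.mem_singleton _)
        refine mul_mem ?_ (pow_mem hXmem n)
        have hh : RatFunc.C c = algebraMap E (RatFunc (ZMod 2)) (algebraMap (ZMod 2) E c) := by
          rw [← IsScalarTower.algebraMap_apply, RatFunc.algebraMap_eq_C]
        rw [hh]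
        exact IntermediateField.algebraMap_mem _ _
  have htop : IntermediateField.adjoin E {(RatFunc.X : RatFunc (ZMod 2))} = ⊤ := by
    rw [eq_top_iff]
    intro b _
    induction b using RatFunc.induction_on with
    | f p q hq => exact div_mem (hpolymem p) (hpolymem q)
  haveI hfd0 : FiniteDimensional E
      (IntermediateField.adjoin E {(RatFunc.X : RatFunc (ZMod 2))}) :=
    IntermediateField.adjoin.finiteDimensional hint
  haveI hfdtop : FiniteDimensional E (⊤ : IntermediateField E (RatFunc (ZMod 2))) := htop ▸ hfd0
  haveI hfd : FiniteDimensional E (RatFunc (ZMod 2)) :=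
    Module.Finite.equiv (IntermediateField.topEquiv
      (F := E) (E := RatFunc (ZMod 2))).toLinearEquiv
  have hfr3 : Module.finrank E (RatFunc (ZMod 2)) ≤ 3 := by
    have h1 : Module.finrank E (RatFunc (ZMod 2))
        = Module.finrank E (IntermediateField.adjoin E {(RatFunc.X : RatFunc (ZMod 2))}) := by
      rw [htop, IntermediateField.finrank_top']
    rw [h1, IntermediateField.adjoin.finrank hint]
    have hdeg : (minpoly E (RatFunc.X : RatFunc (ZMod 2))).degree ≤ P.degree :=
      minpoly.degree_le_of_ne_zero E _ hPmonic.ne_zero haev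
    have hP3 : P.natDegree = 3 := by
      have := hPmonic
      unfold P Q
      compute_degree!
    calc (minpoly E (RatFunc.X : RatFunc (ZMod 2))).natDegree ≤ P.natDegree :=
          Polynomial.natDegree_le_natDegree hdeg
      _ = 3 := hP3
  -- order of σ' is 3
  have hσ'3 : σ' ^ 3 = 1 := by
    ext b
    show (σ' ^ 3) b = b
    rw [pow_succ, pow_succ, pow_one, AlgEquiv.mul_apply, AlgEquiv.mul_apply]
    rw [hσ'apply, hσ'apply, hσ'apply]
    exact sigma_cube σ hfix hX b
  have hσ'ne : σ' ≠ 1 := by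
    intro h
    apply sigmaX_ne σ hfix hX
    have h2' := congrArg (fun f : RatFunc (ZMod 2) ≃ₐ[E] RatFunc (ZMod 2) => f RatFunc.X) h
    simpa [hσ'apply] using h2'
  have horder : orderOf σ' = 3 := by
    have hdvd : orderOf σ' ∣ 3 := orderOf_dvd_of_pow_eq_one hσ'3
    rcases (Nat.prime_three).eq_one_or_self_of_dvd _ hdvd with h | h
    · exact absurd (orderOf_eq_one_iff.mp h) hσ'ne
    · exact h
  -- the fixed field of ⟨σ'⟩
  let H : Subgroup (RatFunc (ZMod 2) ≃ₐ[E] RatFunc (ZMod 2)) := Subgroup.zpowers σ'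
  have hfin : IsOfFinOrder σ' := isOfFinOrder_iff_pow_eq_one.mpr ⟨3, by norm_num, hσ'3⟩
  haveI : Finite H := hfin.finite_zpowers
  let K : IntermediateField E (RatFunc (ZMod 2)) := IntermediateField.fixedField H
  have hK3 : Module.finrank K (RatFunc (ZMod 2)) = 3 := by
    rw [IntermediateField.finrank_fixedField_eq_card]
    rw [Nat.card_zpowers, horder]
  haveI : FiniteDimensional E K := FiniteDimensional.left E K (RatFunc (ZMod 2))
  have hmul : Module.finrank E K * Module.finrank K (RatFunc (ZMod 2))
      = Module.finrank E (RatFunc (ZMod 2)) :=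
    Module.finrank_mul_finrank E K (RatFunc (ZMod 2))
  have hEK1 : Module.finrank E K = 1 := by
    have hpos : 0 < Module.finrank E K := Module.finrank_pos
    nlinarith [hmul, hK3, hfr3, hpos]
  have hKbot : K = ⊥ := IntermediateField.finrank_eq_one_iff.mp hEK1
  constructor
  · intro ha
    have hstab : H ≤ MulAction.stabilizer (RatFunc (ZMod 2) ≃ₐ[E] RatFunc (ZMod 2)) a := by
      rw [Subgroup.zpowers_le]
      rw [MulAction.mem_stabilizer_iff]
      show σ' a = a
      rw [hσ'apply]; exact ha
    have haK : a ∈ K := fun g => hstab g.2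
    rw [hKbot, IntermediateField.mem_bot] at haK
    obtain ⟨x, rfl⟩ := haK
    exact x.2
  · intro ha
    exact hEfix ha
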